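/- Let V be a real random variable whose distribution has a density f with respect to Lebesgue measure, supported on [0,1], with C̲ ≤ f(u) ≤ C̄ for all u ∈ [0,1], where 0 < C̲ < C̄ (necessarily C̲ ≤ 1 ≤ C̄ since f integrates to 1). Then (1/12)·(C̲ + (1−C̲)³/(C̄−C̲)²) ≤ Var(V) ≤ (1/12)·(C̄ − (C̄−1)³/(C̄−C̲)²); in particular C̲/12 ≤ Var(V) ≤ C̄/12. -/

import Mathlib

open MeasureTheory ProbabilityTheory Set
open scoped ENNReal NNReal

lemma aux_integrable_of_supp_bdd {g : ℝ → ℝ} (hg : Measurable g) {a b C : ℝ}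
    (hsupp : ∀ u, u ∉ Icc a b → g u = 0) (hbdd : ∀ u, |g u| ≤ C) :
    Integrable g := by
  have hss : Function.support g ⊆ Icc a b := by
    intro u hu
    by_contra h
    exact hu (hsupp u h)
  rw [← integrableOn_iff_integrable_of_support_subset hss]
  exact Measure.integrableOn_of_bounded (M := C) measure_Icc_lt_top.ne
    hg.aestronglyMeasurable (ae_of_all _ fun u => hbdd u)

open intervalIntegral in
lemma aux_integral_sq_indicator (a b c K : ℝ) (hab : a ≤ b) :
    ∫ u, (u - c) ^ 2 * (Icc a b).indicator (fun _ => K) u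
      = K * (((b - c) ^ 3 - (a - c) ^ 3) / 3) := by
  have h1 : (fun u => (u - c) ^ 2 * (Icc a b).indicator (fun _ => K) u)
      = (Icc a b).indicator (fun u => (u - c) ^ 2 * K) := by
    funext u
    by_cases h : u ∈ Icc a b <;>
      simp [Set.indicator_of_mem, Set.indicator_of_notMem, h]
  rw [h1, MeasureTheory.integral_indicator measurableSet_Icc, integral_Icc_eq_integral_Ioc,
    ← intervalIntegral.integral_of_le hab, intervalIntegral.integral_mul_const,
    intervalIntegral.integral_comp_sub_right (fun x => x ^ 2) c,
    integral_pow]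
  ring

/-- Bathtub principle: if `0 ≤ h ≤ M` with `h` supported in `[0,1]`, then for any center `c`,
`∫ (u-c)² h(u) du ≥ (∫h)³ / (12 M²)`. -/
lemma aux_bathtub {h : ℝ → ℝ} (hm : Measurable h) {M : ℝ} (hM : 0 < M)
    (h0 : ∀ u, 0 ≤ h u) (hle : ∀ u, h u ≤ M)
    (hsupp : ∀ u, u ∉ Icc (0 : ℝ) 1 → h u = 0) (c : ℝ) :
    (∫ u, h u) ^ 3 / (12 * M ^ 2) ≤ ∫ u, (u - c) ^ 2 * h u := by
  have hint : Integrable h := aux_integrable_of_supp_bdd hm hsupp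
    (fun u => abs_le.2 ⟨by linarith [h0 u, hM.le], hle u⟩)
  set m : ℝ := ∫ u, h u with hm_def
  have hm0 : 0 ≤ m := integral_nonneg h0
  set r : ℝ := m / (2 * M) with hr_def
  have hr0 : 0 ≤ r := div_nonneg hm0 (by linarith)
  set g : ℝ → ℝ := (Icc (c - r) (c + r)).indicator (fun _ => M) with hg_def
  have hgmeas : Measurable g := (measurable_const : Measurable fun _ : ℝ => M).indicator measurableSet_Icc
  have hgint : Integrable g := by
    rw [hg_def, integrable_indicator_iff measurableSet_Icc]
    exact integrableOn_const measure_Icc_lt_top.ne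
  have hgval : ∀ u, g u = if u ∈ Icc (c - r) (c + r) then M else 0 := by
    intro u; by_cases hu : u ∈ Icc (c - r) (c + r) <;>
      simp [hg_def, Set.indicator_of_mem, Set.indicator_of_notMem, hu]
  have hintg : ∫ u, g u = m := by
    rw [hg_def, MeasureTheory.integral_indicator_const (M : ℝ) measurableSet_Icc,
      measureReal_def, Real.volume_Icc]
    rw [ENNReal.toReal_ofReal (by linarith : (0:ℝ) ≤ c + r - (c - r))]
    rw [smul_eq_mul, hr_def]
    field_simp
    ring
  -- pointwise comparison
  have hpt : ∀ u, r ^ 2 * (h u - g u) ≤ (u - c) ^ 2 * (h u - g u) := by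
    intro u
    rcases (em (u ∈ Icc (c - r) (c + r))) with hu | hu
    · have hgu : g u = M := by rw [hgval u, if_pos hu]
      have h1 : (u - c) ^ 2 ≤ r ^ 2 := by
        rcases hu with ⟨hu1, hu2⟩
        nlinarith
      nlinarith [hle u]
    · have hgu : g u = 0 := by rw [hgval u, if_neg hu]
      have h1 : r ^ 2 ≤ (u - c) ^ 2 := by
        rcases not_and_or.1 hu with hu1 | hu1
        · push_neg at hu1; nlinarith
        · push_neg at hu1; nlinarith
      nlinarith [h0 u]
  -- integrabilities of weighted functions
  have hinth2 : Integrable (fun u => (u - c) ^ 2 * h u) := by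
    apply aux_integrable_of_supp_bdd (by fun_prop)
      (a := 0) (b := 1) (C := (|c| + 1) ^ 2 * M)
    · intro u hu; simp [hsupp u hu]
    · intro u
      by_cases hu : u ∈ Icc (0:ℝ) 1
      · rcases hu with ⟨hu1, hu2⟩
        rw [abs_mul, abs_of_nonneg (h0 u), abs_of_nonneg (sq_nonneg _)]
        have habs : |u - c| ≤ |c| + 1 := by
          cases' abs_cases c with hc hc <;> cases' abs_cases (u - c) with hd hd <;> linarith
        have h2 : (u - c) ^ 2 ≤ (|c| + 1) ^ 2 := by
          nlinarith [abs_nonneg (u - c), sq_abs (u - c), abs_nonneg c]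
        nlinarith [h0 u, hle u, sq_nonneg (u - c)]
      · rw [hsupp u hu, mul_zero, abs_zero]
        positivity
  have hintg2 : Integrable (fun u => (u - c) ^ 2 * g u) := by
    apply aux_integrable_of_supp_bdd (by fun_prop)
      (a := c - r) (b := c + r) (C := r ^ 2 * M)
    · intro u hu; rw [hgval u, if_neg hu, mul_zero]
    · intro u
      by_cases hu : u ∈ Icc (c - r) (c + r)
      · rw [hgval u, if_pos hu, abs_mul, abs_of_nonneg hM.le,
          abs_of_nonneg (sq_nonneg _)]
        rcases hu with ⟨hu1, hu2⟩
        nlinarith [hM.le, mul_nonneg (by linarith : (0:ℝ) ≤ r - (u - c))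
          (by linarith : (0:ℝ) ≤ (u - c) + r)]
      · rw [hgval u, if_neg hu, mul_zero, abs_zero]
        positivity
  -- the comparison of integrals
  have hcomp : ∫ u, (u - c) ^ 2 * g u ≤ ∫ u, (u - c) ^ 2 * h u := by
    have h1 : ∫ u, r ^ 2 * (h u - g u) ≤ ∫ u, (u - c) ^ 2 * (h u - g u) := by
      apply integral_mono ((hint.sub hgint).const_mul _) _ hpt
      have : (fun u => (u - c) ^ 2 * (h u - g u))
          = fun u => (u - c) ^ 2 * h u - (u - c) ^ 2 * g u := by funext u; ring
      rw [this]; exact hinth2.sub hintg2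
    have h2 : ∫ u, r ^ 2 * (h u - g u) = 0 := by
      rw [MeasureTheory.integral_const_mul, integral_sub hint hgint, hintg]
      simp [hm_def]
    have h3 : ∫ u, (u - c) ^ 2 * (h u - g u)
        = (∫ u, (u - c) ^ 2 * h u) - ∫ u, (u - c) ^ 2 * g u := by
      rw [← integral_sub hinth2 hintg2]
      congr 1; funext u; ring
    linarith [h1, h2.symm ▸ h1, h3 ▸ h1]
  -- compute ∫ (u-c)² g
  have hvalg : ∫ u, (u - c) ^ 2 * g u = m ^ 3 / (12 * M ^ 2) := by
    rw [hg_def, aux_integral_sq_indicator (c - r) (c + r) c M (by linarith)]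
    have : c + r - c = r := by ring
    have h2 : c - r - c = -r := by ring
    rw [this, h2, hr_def]
    field_simp
    ring
  linarith [hcomp, hvalg ▸ hcomp]

lemma aux_integrable_sq_indicator (a b c K : ℝ) :
    Integrable (fun u => (u - c) ^ 2 * (Icc a b).indicator (fun _ => K) u) := by
  have h1 : (fun u => (u - c) ^ 2 * (Icc a b).indicator (fun _ => K) u)
      = (Icc a b).indicator (fun u => (u - c) ^ 2 * K) := by
    funext u
    by_cases h : u ∈ Icc a b <;>
      simp [Set.indicator_of_mem, Set.indicator_of_notMem, h]
  rw [h1, integrable_indicator_iff measurableSet_Icc]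
  exact (Continuous.mul (by continuity) continuous_const).integrableOn_Icc

set_option maxHeartbeats 1000000 in
/-- If a real random variable `V` has a density `f` (w.r.t. Lebesgue
measure) supported on `[0,1]` with `Clo ≤ f ≤ Chi` there, `0 < Clo < Chi`, then
`(1/12)(Clo + (1−Clo)³/(Chi−Clo)²) ≤ Var(V) ≤ (1/12)(Chi − (Chi−1)³/(Chi−Clo)²)`;
in particular `Clo/12 ≤ Var(V) ≤ Chi/12`. -/
theorem variance_density_bounds
    {Ω : Type*} [MeasurableSpace Ω] (P : Measure Ω) [IsProbabilityMeasure P]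
    (V : Ω → ℝ) (hVmeas : Measurable V)
    (Clo Chi : ℝ) (hClo : 0 < Clo) (hCloChi : Clo < Chi)
    (f : ℝ → ℝ) (hfmeas : Measurable f)
    (hlaw : Measure.map V P = volume.withDensity (fun u => ENNReal.ofReal (f u)))
    (hfsupp : ∀ u : ℝ, u ∉ Set.Icc (0 : ℝ) 1 → f u = 0)
    (hfbound : ∀ u ∈ Set.Icc (0 : ℝ) 1, Clo ≤ f u ∧ f u ≤ Chi) :
    ((1 / 12) * (Clo + (1 - Clo) ^ 3 / (Chi - Clo) ^ 2) ≤ variance V P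
        ∧ variance V P ≤ (1 / 12) * (Chi - (Chi - 1) ^ 3 / (Chi - Clo) ^ 2))
      ∧ (Clo / 12 ≤ variance V P ∧ variance V P ≤ Chi / 12) := by
  have fnn : ∀ u, 0 ≤ f u := by
    intro u
    by_cases hu : u ∈ Set.Icc (0 : ℝ) 1
    · linarith [(hfbound u hu).1]
    · rw [hfsupp u hu]
  -- transfer of integrals through the law
  have transfer : ∀ g : ℝ → ℝ, Measurable g →
      ∫ ω, g (V ω) ∂P = ∫ u, g u * f u := by
    intro g hg
    rw [← integral_map hVmeas.aemeasurable hg.aestronglyMeasurable, hlaw]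
    rw [show (fun u => ENNReal.ofReal (f u)) = (fun u => ((f u).toNNReal : ℝ≥0∞)) from rfl,
      integral_withDensity_eq_integral_smul hfmeas.real_toNNReal]
    congr 1
    funext u
    rw [NNReal.smul_def, Real.coe_toNNReal _ (fnn u), smul_eq_mul, mul_comm]
  -- integrability of bounded multiples of f
  have key_int : ∀ (g : ℝ → ℝ) (D : ℝ), Measurable g →
      (∀ u ∈ Set.Icc (0:ℝ) 1, |g u| ≤ D) → Integrable (fun u => g u * f u) := by
    intro g D hg hgD
    apply aux_integrable_of_supp_bdd (g := fun u => g u * f u) (hg.mul hfmeas) (a := 0) (b := 1) (C := D * Chi)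
    · intro u hu; rw [hfsupp u hu, mul_zero]
    · intro u
      by_cases hu : u ∈ Set.Icc (0:ℝ) 1
      · rw [abs_mul, abs_of_nonneg (fnn u)]
        have h1 := hgD u hu
        have h2 := (hfbound u hu).2
        have hD : 0 ≤ D := le_trans (abs_nonneg _) h1
        nlinarith [abs_nonneg (g u), fnn u]
      · rw [hfsupp u hu, mul_zero, abs_zero]
        have hD : 0 ≤ D := le_trans (abs_nonneg _) (hgD 0 (by constructor <;> norm_num))
        nlinarith
  have hint_f : Integrable f := by
    have := key_int (fun _ => (1:ℝ)) 1 measurable_const (by intro u _; simp)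
    simpa using this
  have hint_idf : Integrable (fun u => u * f u) :=
    key_int (fun u => u) 1 (by fun_prop) (fun u hu => abs_le.2 ⟨by linarith [hu.1], hu.2⟩)
  have hint_sqf : Integrable (fun u => u ^ 2 * f u) :=
    key_int (fun u => u ^ 2) 1 (measurable_id.pow_const 2)
      (fun u hu => by rw [abs_of_nonneg (sq_nonneg u)]; nlinarith [hu.1, hu.2])
  have hint_c : ∀ c : ℝ, Integrable (fun u => (u - c) ^ 2 * f u) := by
    intro c
    apply key_int _ ((|c| + 1) ^ 2) (by fun_prop)
    intro u hu
    rw [abs_of_nonneg (sq_nonneg _)]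
    have habs : |u - c| ≤ |c| + 1 := by
      cases' abs_cases c with hc hc <;> cases' abs_cases (u - c) with hd hd <;>
        [skip; skip; skip; skip] <;> rcases hu with ⟨hu1, hu2⟩ <;> linarith
    nlinarith [abs_nonneg (u - c), sq_abs (u - c)]
  -- total mass of f is 1
  have h1 : (volume.withDensity fun u => ENNReal.ofReal (f u)) Set.univ = 1 := by
    rw [← hlaw, Measure.map_apply hVmeas MeasurableSet.univ]
    simp
  have h2 : ∫⁻ u, ENNReal.ofReal (f u) = 1 := by
    rwa [withDensity_apply _ MeasurableSet.univ, Measure.restrict_univ] at h1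
  have hftot : ∫ u, f u = 1 := by
    rw [integral_eq_lintegral_of_nonneg_ae (ae_of_all _ fnn) hfmeas.aestronglyMeasurable, h2]
    simp
  -- V lands in [0,1] a.s.
  have hmap_compl : Measure.map V P (Set.Icc (0:ℝ) 1)ᶜ = 0 := by
    rw [hlaw, withDensity_apply _ measurableSet_Icc.compl]
    have : ∀ u ∈ (Set.Icc (0:ℝ) 1)ᶜ, ENNReal.ofReal (f u) = (fun _ => (0:ℝ≥0∞)) u := by
      intro u hu
      simp [hfsupp u hu]
    rw [setLIntegral_congr_fun measurableSet_Icc.compl (fun u hu => this u hu)]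
    simp
  have hV01 : ∀ᵐ ω ∂P, V ω ∈ Set.Icc (0:ℝ) 1 := by
    rw [ae_iff]
    have hset : {ω | ¬ V ω ∈ Set.Icc (0:ℝ) 1} = V ⁻¹' (Set.Icc (0:ℝ) 1)ᶜ := rfl
    rw [hset, ← Measure.map_apply hVmeas measurableSet_Icc.compl, hmap_compl]
  have hmem : MemLp V 2 P := memLp_of_bounded hV01 hVmeas.aestronglyMeasurable 2
  set μ1 : ℝ := ∫ u, u * f u with hμ1_def
  set m2 : ℝ := ∫ u, u ^ 2 * f u with hm2_def
  have hEV : ∫ ω, V ω ∂P = μ1 := by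
    simpa using transfer (fun u => u) (by fun_prop)
  have hEV2 : ∫ ω, (V ω) ^ 2 ∂P = m2 :=
    transfer (fun u => u ^ 2) (measurable_id.pow_const 2)
  have hvar : variance V P = m2 - μ1 ^ 2 := by
    rw [variance_eq_sub hmem]
    simp only [Pi.pow_apply]
    rw [hEV2, hEV]
  -- second moment about any center
  have hexp : ∀ c : ℝ, ∫ u, (u - c) ^ 2 * f u = m2 - 2 * c * μ1 + c ^ 2 := by
    intro c
    have h3 : (fun u => (u - c) ^ 2 * f u)
        = fun u => (u ^ 2 * f u - (2 * c) * (u * f u)) + c ^ 2 * f u := by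
      funext u; ring
    have i1 : Integrable (fun u => u ^ 2 * f u - 2 * c * (u * f u)) :=
      hint_sqf.sub (hint_idf.const_mul (2 * c))
    have i2 : Integrable (fun u => c ^ 2 * f u) := hint_f.const_mul _
    rw [h3, integral_add i1 i2, integral_sub hint_sqf (hint_idf.const_mul (2 * c)),
      MeasureTheory.integral_const_mul, MeasureTheory.integral_const_mul, hftot,
      ← hμ1_def, ← hm2_def]
    ring
  -- now the bounds
  set M : ℝ := Chi - Clo with hM_def
  have hMpos : 0 < M := by rw [hM_def]; linarith
  -- lower gap function
  set gl : ℝ → ℝ := fun u => f u - (Icc (0:ℝ) 1).indicator (fun _ => Clo) u with hgl_def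
  have hglval : ∀ u, gl u = if u ∈ Icc (0:ℝ) 1 then f u - Clo else 0 := by
    intro u
    by_cases hu : u ∈ Icc (0:ℝ) 1
    · rw [hgl_def, if_pos hu]; simp only [indicator_of_mem hu]
    · rw [hgl_def, if_neg hu]; simp only [indicator_of_notMem hu, hfsupp u hu, sub_zero]
  have hglmeas : Measurable gl := hfmeas.sub (measurable_const.indicator measurableSet_Icc)
  have hgl0 : ∀ u, 0 ≤ gl u := by
    intro u; rw [hglval u]; split_ifs with hu
    · linarith [(hfbound u hu).1]
    · exact le_refl 0
  have hglle : ∀ u, gl u ≤ M := by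
    intro u; rw [hglval u]; split_ifs with hu
    · rw [hM_def]; linarith [(hfbound u hu).2]
    · exact hMpos.le
  have hglsupp : ∀ u, u ∉ Icc (0:ℝ) 1 → gl u = 0 := fun u hu => by rw [hglval u, if_neg hu]
  have hind_int : ∀ K : ℝ, Integrable ((Icc (0:ℝ) 1).indicator (fun _ => K)) := by
    intro K
    rw [integrable_indicator_iff measurableSet_Icc]
    exact integrableOn_const measure_Icc_lt_top.ne
  have hind_val : ∀ K : ℝ, ∫ u, (Icc (0:ℝ) 1).indicator (fun _ => K) u = K := by
    intro K
    rw [MeasureTheory.integral_indicator_const K measurableSet_Icc, measureReal_def, Real.volume_Icc]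
    norm_num
  have hglint_val : ∫ u, gl u = 1 - Clo := by
    rw [hgl_def, integral_sub hint_f (hind_int Clo), hftot, hind_val]
  have hClo1 : Clo ≤ 1 := by
    have h : (0:ℝ) ≤ ∫ u, gl u := integral_nonneg hgl0
    rw [hglint_val] at h; linarith
  have intgl2 : Integrable (fun u => (u - μ1) ^ 2 * gl u) := by
    have heq : (fun u => (u - μ1) ^ 2 * gl u)
        = fun u => (u - μ1) ^ 2 * f u
            - (u - μ1) ^ 2 * (Icc (0:ℝ) 1).indicator (fun _ => Clo) u := by
      funext u; simp only [hgl_def]; ring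
    rw [heq]
    exact (hint_c μ1).sub (aux_integrable_sq_indicator 0 1 μ1 Clo)
  have hsplitL : ∫ u, (u - μ1) ^ 2 * f u
      = (∫ u, (u - μ1) ^ 2 * (Icc (0:ℝ) 1).indicator (fun _ => Clo) u)
        + ∫ u, (u - μ1) ^ 2 * gl u := by
    rw [← integral_add (aux_integrable_sq_indicator 0 1 μ1 Clo) intgl2]
    congr 1; funext u; simp only [hgl_def]; ring
  have hL1 : ∫ u, (u - μ1) ^ 2 * (Icc (0:ℝ) 1).indicator (fun _ => Clo) u
      = Clo * (((1 - μ1) ^ 3 - (0 - μ1) ^ 3) / 3) :=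
    aux_integral_sq_indicator 0 1 μ1 Clo zero_le_one
  have hL2 := aux_bathtub hglmeas hMpos hgl0 hglle hglsupp μ1
  rw [hglint_val] at hL2
  have hvar_eq : variance V P = ∫ u, (u - μ1) ^ 2 * f u := by
    rw [hvar, hexp μ1]; ring
  have hlow : Clo / 12 + (1 - Clo) ^ 3 / (12 * M ^ 2) ≤ variance V P := by
    rw [hvar_eq, hsplitL, hL1]
    have h5 : Clo / 12 ≤ Clo * (((1 - μ1) ^ 3 - (0 - μ1) ^ 3) / 3) := by
      nlinarith [mul_nonneg hClo.le (sq_nonneg (μ1 - 1/2))]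
    linarith [hL2]
  -- upper gap function
  set gu : ℝ → ℝ := fun u => (Icc (0:ℝ) 1).indicator (fun _ => Chi) u - f u with hgu_def
  have hguval : ∀ u, gu u = if u ∈ Icc (0:ℝ) 1 then Chi - f u else 0 := by
    intro u
    by_cases hu : u ∈ Icc (0:ℝ) 1
    · rw [hgu_def, if_pos hu]; simp only [indicator_of_mem hu]
    · rw [hgu_def, if_neg hu]; simp only [indicator_of_notMem hu, hfsupp u hu, sub_zero]
  have hgumeas : Measurable gu := (measurable_const.indicator measurableSet_Icc).sub hfmeas
  have hgu0 : ∀ u, 0 ≤ gu u := by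
    intro u; rw [hguval u]; split_ifs with hu
    · linarith [(hfbound u hu).2]
    · exact le_refl 0
  have hgule : ∀ u, gu u ≤ M := by
    intro u; rw [hguval u]; split_ifs with hu
    · rw [hM_def]; linarith [(hfbound u hu).1]
    · exact hMpos.le
  have hgusupp : ∀ u, u ∉ Icc (0:ℝ) 1 → gu u = 0 := fun u hu => by rw [hguval u, if_neg hu]
  have hguint_val : ∫ u, gu u = Chi - 1 := by
    rw [hgu_def, integral_sub (hind_int Chi) hint_f, hftot, hind_val]
  have hChi1 : 1 ≤ Chi := by
    have h : (0:ℝ) ≤ ∫ u, gu u := integral_nonneg hgu0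
    rw [hguint_val] at h; linarith
  have intgu2 : Integrable (fun u => (u - 1/2) ^ 2 * gu u) := by
    have heq : (fun u => (u - 1/2) ^ 2 * gu u)
        = fun u => (u - 1/2) ^ 2 * (Icc (0:ℝ) 1).indicator (fun _ => Chi) u
            - (u - 1/2) ^ 2 * f u := by
      funext u; simp only [hgu_def]; ring
    rw [heq]
    exact (aux_integrable_sq_indicator 0 1 (1/2) Chi).sub (hint_c (1/2))
  have hsplitU : ∫ u, (u - 1/2) ^ 2 * f u
      = (∫ u, (u - 1/2) ^ 2 * (Icc (0:ℝ) 1).indicator (fun _ => Chi) u)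
        - ∫ u, (u - 1/2) ^ 2 * gu u := by
    rw [← integral_sub (aux_integrable_sq_indicator 0 1 (1/2) Chi) intgu2]
    congr 1; funext u; simp only [hgu_def]; ring
  have hU1 : ∫ u, (u - 1/2) ^ 2 * (Icc (0:ℝ) 1).indicator (fun _ => Chi) u
      = Chi * (1 / 12) := by
    rw [aux_integral_sq_indicator 0 1 (1/2) Chi zero_le_one]
    norm_num
  have hU2 := aux_bathtub hgumeas hMpos hgu0 hgule hgusupp (1/2)
  rw [hguint_val] at hU2
  have hvar_le : variance V P ≤ ∫ u, (u - 1/2) ^ 2 * f u := by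
    rw [hvar, hexp (1/2)]
    nlinarith [sq_nonneg (μ1 - 1/2)]
  have hup : variance V P ≤ Chi / 12 - (Chi - 1) ^ 3 / (12 * M ^ 2) := by
    rw [hsplitU, hU1] at hvar_le
    linarith [hU2]
  -- assemble
  have hMne : (M:ℝ) ≠ 0 := hMpos.ne'
  have e1 : (1/12) * (Clo + (1 - Clo) ^ 3 / M ^ 2) = Clo / 12 + (1 - Clo) ^ 3 / (12 * M ^ 2) := by
    field_simp
  have e2 : (1/12) * (Chi - (Chi - 1) ^ 3 / M ^ 2) = Chi / 12 - (Chi - 1) ^ 3 / (12 * M ^ 2) := by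
    field_simp
  have hposL : 0 ≤ (1 - Clo) ^ 3 / (12 * M ^ 2) :=
    div_nonneg (pow_nonneg (by linarith) 3) (by positivity)
  have hposU : 0 ≤ (Chi - 1) ^ 3 / (12 * M ^ 2) :=
    div_nonneg (pow_nonneg (by linarith) 3) (by positivity)
  refine ⟨⟨by linarith, by linarith⟩, by linarith, by linarith⟩
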